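/- arXiv:2401.15732 — 10 statements merged into one kernel-verified Lean document; each statement's English description precedes it below -/
import Mathlib

section
/- Let X, Y, Z be n×n complex matrices and κ a complex scalar satisfying the cyclic commutation relations [X,Y] = κZ, [Y,Z] = κX, [Z,X] = κY. Then for any complex scalar p, exp(-p•Z) * X * exp(p•Z) = cos(κp) • X - sin(κp) • Y. -/
open NormedSpace

lemma semiconj_exp {n : ℕ} (Z A : Matrix (Fin n) (Fin n) ℂ) (l : ℂ)
    (h : Z * A = A * Z + l • A) (p : ℂ) :
    exp (-p • Z) * A * exp (p • Z) = Complex.exp (-(p * l)) • A := by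
  letI : SeminormedRing (Matrix (Fin n) (Fin n) ℂ) := Matrix.linftyOpSemiNormedRing
  letI : NormedRing (Matrix (Fin n) (Fin n) ℂ) := Matrix.linftyOpNormedRing
  letI : NormedAlgebra ℂ (Matrix (Fin n) (Fin n) ℂ) := Matrix.linftyOpNormedAlgebra
  set B : Matrix (Fin n) (Fin n) ℂ := -p • Z with hB
  set C : Matrix (Fin n) (Fin n) ℂ := -p • Z + (-(p * l)) • (1 : Matrix (Fin n) (Fin n) ℂ) with hC
  have hBA : B * A = A * C := by
    rw [hB, hC, smul_mul_assoc, h, mul_add, mul_smul_comm, mul_smul_comm, mul_one]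
    module
  have hpow : ∀ k : ℕ, B ^ k * A = A * C ^ k := by
    intro k
    induction k with
    | zero => simp
    | succ k ih => rw [pow_succ, pow_succ, mul_assoc, hBA, ← mul_assoc, ih, mul_assoc]
  have h1 : exp B * A = A * exp C := by
    refine HasSum.unique (((exp_series_hasSum_exp' (𝕂 := ℂ) B).mul_right A).congr_fun ?_)
      ((exp_series_hasSum_exp' (𝕂 := ℂ) C).mul_left A)
    intro k
    rw [smul_mul_assoc, hpow, mul_smul_comm]
  have hexp1 : exp ((-(p * l)) • (1 : Matrix (Fin n) (Fin n) ℂ))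
      = Complex.exp (-(p * l)) • (1 : Matrix (Fin n) (Fin n) ℂ) := by
    rw [← Algebra.algebraMap_eq_smul_one]
    erw [← algebraMap_exp_comm (𝕂 := ℂ) (𝔸 := Matrix (Fin n) (Fin n) ℂ)]
    rw [Algebra.algebraMap_eq_smul_one, Complex.exp_eq_exp_ℂ]
  have hC' : exp C = Complex.exp (-(p * l)) • exp B := by
    rw [hC, Matrix.exp_add_of_commute _ _ ((Commute.one_right (-p • Z)).smul_right _), hexp1]
    rw [mul_smul_comm, mul_one]
  have hBinv : exp B * exp (p • Z) = 1 := by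
    rw [← Matrix.exp_add_of_commute _ _ (((Commute.refl Z).smul_right p).smul_left (-p)),
      show (-p) • Z + p • Z = 0 by module, exp_zero]
  calc exp B * A * exp (p • Z) = A * exp C * exp (p • Z) := by rw [h1]
    _ = Complex.exp (-(p * l)) • (A * (exp B * exp (p • Z))) := by
        rw [hC', mul_smul_comm, smul_mul_assoc, mul_assoc]
    _ = Complex.exp (-(p * l)) • A := by rw [hBinv, mul_one]

theorem stmt0 {n : ℕ} (X Y Z : Matrix (Fin n) (Fin n) ℂ) (κ : ℂ)
    (hXY : X * Y - Y * X = κ • Z) (hYZ : Y * Z - Z * Y = κ • X)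
    (hZX : Z * X - X * Z = κ • Y) (p : ℂ) :
    exp (-p • Z) * X * exp (p • Z)
      = Complex.cos (κ * p) • X - Complex.sin (κ * p) • Y := by
  have hZY : Z * Y = Y * Z - κ • X := by rw [← hYZ]; abel
  have hZX' : Z * X = X * Z + κ • Y := by rw [← hZX]; abel
  have hI1 : -(Complex.I * κ) * Complex.I = κ := by
    have := Complex.I_mul_I; linear_combination -κ * this
  have hI2 : (Complex.I * κ) * Complex.I = -κ := by
    have := Complex.I_mul_I; linear_combination κ * this
  have c1 : Z * (X + Complex.I • Y)
      = (X + Complex.I • Y) * Z + (-(Complex.I * κ)) • (X + Complex.I • Y) := by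
    rw [mul_add, add_mul, mul_smul_comm, smul_mul_assoc, hZX', hZY, smul_add,
      smul_smul, hI1, smul_sub, smul_smul]
    module
  have c2 : Z * (X - Complex.I • Y)
      = (X - Complex.I • Y) * Z + (Complex.I * κ) • (X - Complex.I • Y) := by
    rw [mul_sub, sub_mul, mul_smul_comm, smul_mul_assoc, hZX', hZY, smul_sub,
      smul_smul, smul_sub, smul_smul, hI2]
    module
  have e1 := semiconj_exp Z (X + Complex.I • Y) (-(Complex.I * κ)) c1 p
  have e2 := semiconj_exp Z (X - Complex.I • Y) (Complex.I * κ) c2 p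
  rw [show -(p * -(Complex.I * κ)) = κ * p * Complex.I by ring] at e1
  rw [show -(p * (Complex.I * κ)) = -(κ * p) * Complex.I by ring] at e2
  have h2X : (X + Complex.I • Y) + (X - Complex.I • Y) = (2 : ℂ) • X := by module
  have hsplit : exp (-p • Z) * X * exp (p • Z)
      = (2⁻¹ : ℂ) • (exp (-p • Z) * (X + Complex.I • Y) * exp (p • Z)
          + exp (-p • Z) * (X - Complex.I • Y) * exp (p • Z)) := by
    rw [← add_mul, ← mul_add, h2X, mul_smul_comm, smul_mul_assoc, smul_smul]
    norm_num
  rw [hsplit, e1, e2]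
  unfold Complex.cos Complex.sin
  ext i j
  simp only [Matrix.smul_apply, Matrix.add_apply, Matrix.sub_apply, smul_eq_mul]
  ring
end

section
/- Let X, Y, Z be n×n complex matrices and κ a complex scalar satisfying the cyclic commutation relations [X,Y] = κZ, [Y,Z] = κX, [Z,X] = κY. Then for any complex scalar p, exp(-p•Z) * Y * exp(p•Z) = cos(κp) • Y + sin(κp) • X. -/
open NormedSpace

theorem stmt1 {n : ℕ} (X Y Z : Matrix (Fin n) (Fin n) ℂ) (κ : ℂ)
    (hXY : X * Y - Y * X = κ • Z) (hYZ : Y * Z - Z * Y = κ • X)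
    (hZX : Z * X - X * Z = κ • Y) (p : ℂ) :
    exp (-p • Z) * Y * exp (p • Z)
      = Complex.cos (κ * p) • Y + Complex.sin (κ * p) • X := by
  letI : SeminormedRing (Matrix (Fin n) (Fin n) ℂ) := Matrix.linftyOpSemiNormedRing
  letI : NormedRing (Matrix (Fin n) (Fin n) ℂ) := Matrix.linftyOpNormedRing
  letI : NormedAlgebra ℂ (Matrix (Fin n) (Fin n) ℂ) := Matrix.linftyOpNormedAlgebra
  set f : ℂ → Matrix (Fin n) (Fin n) ℂ :=
    fun t => exp (-t • Z) * Y * exp (t • Z) with hfdef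
  set g : ℂ → Matrix (Fin n) (Fin n) ℂ :=
    fun t => exp (-t • Z) * X * exp (t • Z) with hgdef
  have hE : ∀ t : ℂ, HasDerivAt (fun u : ℂ => exp (-u • Z)) (exp (-t • Z) * -Z) t := by
    intro t
    have h := hasDerivAt_exp_smul_const (𝕂 := ℂ) (-Z) t
    simp only [smul_neg, neg_smul] at h ⊢
    exact h
  have hE' : ∀ t : ℂ, HasDerivAt (fun u : ℂ => exp (u • Z)) (exp (t • Z) * Z) t :=
    fun t => hasDerivAt_exp_smul_const (𝕂 := ℂ) Z t
  have hc : ∀ t : ℂ, exp (t • Z) * Z = Z * exp (t • Z) := by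
    intro t
    exact ((Commute.refl Z).smul_left t).exp_left
  have hfd : ∀ t : ℂ, HasDerivAt f (κ • g t) t := by
    intro t
    have h := ((hE t).mul_const Y).mul (hE' t)
    convert h using 1
    all_goals try rfl
    rw [hc t]
    have h2 : κ • g t = exp (-t • Z) * (Y * Z - Z * Y) * exp (t • Z) := by
      rw [hYZ, hgdef]
      simp [smul_mul_assoc, mul_smul_comm]
    rw [h2]
    noncomm_ring
  have hgd : ∀ t : ℂ, HasDerivAt g (-(κ • f t)) t := by
    intro t
    have h := ((hE t).mul_const X).mul (hE' t)
    convert h using 1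
    all_goals try rfl
    rw [hc t]
    have h2 : -(κ • f t) = exp (-t • Z) * (X * Z - Z * X) * exp (t • Z) := by
      have : X * Z - Z * X = -(κ • Y) := by rw [← hZX]; abel
      rw [this, hfdef]
      simp [smul_mul_assoc, mul_smul_comm]
    rw [h2]
    noncomm_ring
  have hcos : ∀ t : ℂ, HasDerivAt (fun u : ℂ => Complex.cos (κ * u))
      (-Complex.sin (κ * t) * κ) t := fun t => by simpa using ((hasDerivAt_id t).const_mul κ).ccos
  have hsin : ∀ t : ℂ, HasDerivAt (fun u : ℂ => Complex.sin (κ * u))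
      (Complex.cos (κ * t) * κ) t := fun t => by simpa using ((hasDerivAt_id t).const_mul κ).csin
  set A : ℂ → Matrix (Fin n) (Fin n) ℂ :=
    fun t => Complex.cos (κ * t) • f t - Complex.sin (κ * t) • g t with hAdef
  set B : ℂ → Matrix (Fin n) (Fin n) ℂ :=
    fun t => Complex.sin (κ * t) • f t + Complex.cos (κ * t) • g t with hBdef
  have hA : ∀ t : ℂ, HasDerivAt A 0 t := by
    intro t
    have h := ((hcos t).smul (hfd t)).sub ((hsin t).smul (hgd t))
    convert h using 1
    all_goals try rfl
    simp only [smul_smul, smul_neg, neg_smul]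
    module
  have hB : ∀ t : ℂ, HasDerivAt B 0 t := by
    intro t
    have h := ((hsin t).smul (hfd t)).add ((hcos t).smul (hgd t))
    convert h using 1
    all_goals try rfl
    simp only [smul_smul, smul_neg, neg_smul]
    module
  have hAconst : A p = A 0 :=
    is_const_of_deriv_eq_zero (fun t => (hA t).differentiableAt) (fun t => (hA t).deriv) p 0
  have hBconst : B p = B 0 :=
    is_const_of_deriv_eq_zero (fun t => (hB t).differentiableAt) (fun t => (hB t).deriv) p 0
  have hf0 : f 0 = Y := by simp [hfdef, exp_zero]
  have hg0 : g 0 = X := by simp [hgdef, exp_zero]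
  have hA0 : A 0 = Y := by simp [hAdef, hf0, hg0]
  have hB0 : B 0 = X := by simp [hBdef, hf0, hg0]
  have key : Complex.cos (κ * p) • A p + Complex.sin (κ * p) • B p = f p := by
    have pyth : Complex.cos (κ * p) * Complex.cos (κ * p)
        + Complex.sin (κ * p) * Complex.sin (κ * p) = 1 := by
      have := Complex.cos_sq_add_sin_sq (κ * p)
      linear_combination this
    calc Complex.cos (κ * p) • A p + Complex.sin (κ * p) • B p
        = (Complex.cos (κ * p) * Complex.cos (κ * p)
            + Complex.sin (κ * p) * Complex.sin (κ * p)) • f p := by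
          rw [hAdef, hBdef]; module
      _ = f p := by rw [pyth, one_smul]
  have : f p = Complex.cos (κ * p) • Y + Complex.sin (κ * p) • X := by
    rw [← key, hAconst, hBconst, hA0, hB0]
  exact this
end

section
/- Let X, Y, Z be n×n complex matrices and κ a complex scalar satisfying the cyclic commutation relations [X,Y] = κZ, [Y,Z] = κX, [Z,X] = κY, and let a, b, p be complex scalars. Then exp(-p•Z) * (a•X + b•Y) * exp(p•Z) = (a*cos(κp) + b*sin(κp)) • X + (b*cos(κp) - a*sin(κp)) • Y. -/
open NormedSpace

theorem stmt3 {n : ℕ} (X Y Z : Matrix (Fin n) (Fin n) ℂ) (κ : ℂ)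
    (hXY : X * Y - Y * X = κ • Z) (hYZ : Y * Z - Z * Y = κ • X)
    (hZX : Z * X - X * Z = κ • Y) (a b p : ℂ) :
    exp (-p • Z) * (a • X + b • Y) * exp (p • Z)
      = (a * Complex.cos (κ * p) + b * Complex.sin (κ * p)) • X
        + (b * Complex.cos (κ * p) - a * Complex.sin (κ * p)) • Y := by
  letI : NormedRing (Matrix (Fin n) (Fin n) ℂ) := Matrix.linftyOpNormedRing
  letI : NormedAlgebra ℂ (Matrix (Fin n) (Fin n) ℂ) := Matrix.linftyOpNormedAlgebra
  letI : CompleteSpace (Matrix (Fin n) (Fin n) ℂ) := FiniteDimensional.complete ℂ _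
  set c1 : ℂ → ℂ := fun t => a * Complex.cos (κ * t) + b * Complex.sin (κ * t) with hc1
  set c2 : ℂ → ℂ := fun t => b * Complex.cos (κ * t) - a * Complex.sin (κ * t) with hc2
  set g : ℂ → Matrix (Fin n) (Fin n) ℂ := fun t => c1 t • X + c2 t • Y with hgdef
  set h : ℂ → Matrix (Fin n) (Fin n) ℂ :=
    fun t => exp (t • Z) * g t * exp ((-t) • Z) with hhdef
  -- basic commutation facts
  have hZX' : Z * X = X * Z + κ • Y := by rw [← hZX]; noncomm_ring
  have hZY' : Z * Y = Y * Z - κ • X := by rw [← hYZ]; noncomm_ring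
  have key : ∀ t : ℂ, HasDerivAt h 0 t := by
    intro t
    have hcos : HasDerivAt (fun t : ℂ => Complex.cos (κ * t))
        (-Complex.sin (κ * t) * κ) t := by
      simpa [Function.comp_def] using (Complex.hasDerivAt_cos (κ * t)).comp t
        ((hasDerivAt_id t).const_mul κ)
    have hsin : HasDerivAt (fun t : ℂ => Complex.sin (κ * t))
        (Complex.cos (κ * t) * κ) t := by
      simpa [Function.comp_def] using (Complex.hasDerivAt_sin (κ * t)).comp t
        ((hasDerivAt_id t).const_mul κ)
    have hc1' : HasDerivAt c1 (κ * c2 t) t := by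
      have := ((hcos.const_mul a).add (hsin.const_mul b))
      refine this.congr_deriv ?_
      simp only [hc2]; ring
    have hc2' : HasDerivAt c2 (-(κ * c1 t)) t := by
      have := ((hcos.const_mul b).sub (hsin.const_mul a))
      refine this.congr_deriv ?_
      simp only [hc1]; ring
    have hg' : HasDerivAt g ((κ * c2 t) • X + (-(κ * c1 t)) • Y) t :=
      (hc1'.smul_const X).add (hc2'.smul_const Y)
    have he1 : HasDerivAt (fun t : ℂ => exp (t • Z)) (exp (t • Z) * Z) t :=
      hasDerivAt_exp_smul_const Z t
    have he2 : HasDerivAt (fun t : ℂ => exp ((-t) • Z))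
        ((-1 : ℂ) • (exp ((-t) • Z) * Z)) t := by
      exact HasDerivAt.scomp t (hasDerivAt_exp_smul_const Z (-t)) (hasDerivAt_neg t)
    have hmul := (he1.mul hg').mul he2
    have hcomm : exp ((-t) • Z) * Z = Z * exp ((-t) • Z) :=
      (((Commute.refl Z).smul_right (-t)).exp_right).eq.symm
    refine hmul.congr_deriv ?_
    rw [hcomm]
    have hzero : (Z * g t + ((κ * c2 t) • X + (-(κ * c1 t)) • Y)) - g t * Z = 0 := by
      simp only [hgdef, add_mul, mul_add, Matrix.mul_smul, Matrix.smul_mul, hZX', hZY']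
      module
    have : (exp (t • Z) * Z * g t + exp (t • Z) * ((κ * c2 t) • X + (-(κ * c1 t)) • Y)) *
          exp ((-t) • Z) + exp (t • Z) * g t * ((-1 : ℂ) • (Z * exp ((-t) • Z)))
        = exp (t • Z) * ((Z * g t + ((κ * c2 t) • X + (-(κ * c1 t)) • Y)) - g t * Z) *
          exp ((-t) • Z) := by
      simp only [neg_one_smul, mul_neg]
      noncomm_ring
    simp only [Pi.mul_apply]
    rw [this, hzero, mul_zero, zero_mul]
  have hconst : h p = h 0 :=
    is_const_of_deriv_eq_zero (fun t => (key t).differentiableAt)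
      (fun t => (key t).deriv) p 0
  have hh0 : h 0 = a • X + b • Y := by
    simp [hhdef, hgdef, hc1, hc2]
  have hp : exp (p • Z) * g p * exp ((-p) • Z) = a • X + b • Y := by
    rw [← hh0]; exact hconst
  have hinv1 : exp ((-p) • Z) * exp (p • Z) = 1 := by
    rw [← Matrix.exp_add_of_commute _ _ (((Commute.refl Z).smul_left (-p)).smul_right p)]
    simp
  have hinv2 : exp (p • Z) * exp ((-p) • Z) = 1 := by
    rw [← Matrix.exp_add_of_commute _ _ (((Commute.refl Z).smul_left p).smul_right (-p))]
    simp
  have : exp (-p • Z) * (a • X + b • Y) * exp (p • Z) = g p := by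
    rw [← hp]
    have : (-p) • Z = -p • Z := rfl
    calc exp (-p • Z) * (exp (p • Z) * g p * exp ((-p) • Z)) * exp (p • Z)
        = (exp ((-p) • Z) * exp (p • Z)) * g p *
            (exp ((-p) • Z) * exp (p • Z)) := by rw [← this]; noncomm_ring
      _ = g p := by rw [hinv1]; simp
  rw [this]
end

section
/- Let X, Y, Z be n×n complex matrices, κ a complex scalar with the cyclic relations [X,Y] = κZ, [Y,Z] = κX, [Z,X] = κY, and let a, b, p, q be complex scalars such that a = q * cos(κp) and b = q * sin(κp). Then exp(a•X + b•Y) = exp(p•Z) * exp(q•X) * exp(-p•Z). -/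
open NormedSpace

section Aux

attribute [local instance] Matrix.linftyOpNormedRing Matrix.linftyOpNormedAlgebra

lemma sandwich_aux {R : Type*} [Ring R] (E E' A : R) (h1 : E * E' = 1) (h2 : E' * E = 1) :
    E * (E' * A * E) * E' = A := by
  have : E * (E' * A * E) * E' = (E * E') * A * (E * E') := by noncomm_ring
  rw [this, h1, one_mul, mul_one]

lemma conj_key {n : ℕ} (X Y Z : Matrix (Fin n) (Fin n) ℂ) (κ : ℂ)
    (hYZ : Y * Z - Z * Y = κ • X) (hZX : Z * X - X * Z = κ • Y) (p : ℂ) :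
    exp (-(p • Z)) * (Complex.cos (κ * p) • X + Complex.sin (κ * p) • Y) * exp (p • Z)
      = X := by
  set G : ℂ → Matrix (Fin n) (Fin n) ℂ :=
    fun t => Complex.cos (κ * t) • X + Complex.sin (κ * t) • Y with hG
  set f : ℂ → Matrix (Fin n) (Fin n) ℂ :=
    fun t => exp (t • (-Z)) * G t * exp (t • Z) with hf
  have e1 : X * Z = Z * X - κ • Y := by rw [← hZX]; abel
  have e2 : Y * Z = Z * Y + κ • X := by rw [← hYZ]; abel
  have hcomm : ∀ t : ℂ, exp (t • Z) * Z = Z * exp (t • Z) := by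
    intro t
    exact (((Commute.refl Z).smul_left t).exp_left).eq
  have hderiv : ∀ t : ℂ, HasDerivAt f 0 t := by
    intro t
    have h1 : HasDerivAt (fun u : ℂ => exp (u • (-Z))) (exp (t • (-Z)) * (-Z)) t :=
      hasDerivAt_exp_smul_const (-Z) t
    have h3 : HasDerivAt (fun u : ℂ => exp (u • Z)) (exp (t • Z) * Z) t :=
      hasDerivAt_exp_smul_const Z t
    have hc : HasDerivAt (fun u : ℂ => Complex.cos (κ * u))
        (-Complex.sin (κ * t) * κ) t := by
      simpa using ((hasDerivAt_id t).const_mul κ).ccos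
    have hs : HasDerivAt (fun u : ℂ => Complex.sin (κ * u))
        (Complex.cos (κ * t) * κ) t := by
      simpa using ((hasDerivAt_id t).const_mul κ).csin
    have h2 : HasDerivAt G
        ((-Complex.sin (κ * t) * κ) • X + (Complex.cos (κ * t) * κ) • Y) t :=
      (hc.smul_const X).add (hs.smul_const Y)
    have hprod := (h1.mul h2).mul h3
    have hzero : (-Z) * G t +
        ((-Complex.sin (κ * t) * κ) • X + (Complex.cos (κ * t) * κ) • Y) = -(G t * Z) := by
      simp only [hG]
      simp only [mul_add, add_mul, Matrix.mul_smul, Matrix.smul_mul, e1, e2, neg_mul,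
        smul_sub, smul_add, smul_smul]
      module
    have hval : (exp (t • (-Z)) * (-Z) * G t + exp (t • (-Z)) *
          ((-Complex.sin (κ * t) * κ) • X + (Complex.cos (κ * t) * κ) • Y)) * exp (t • Z)
        + exp (t • (-Z)) * G t * (exp (t • Z) * Z) = 0 := by
      rw [hcomm t]
      have hgather : exp (t • (-Z)) * (-Z) * G t + exp (t • (-Z)) *
          ((-Complex.sin (κ * t) * κ) • X + (Complex.cos (κ * t) * κ) • Y)
          = exp (t • (-Z)) * (-(G t * Z)) := by
        rw [← hzero]; noncomm_ring
      rw [hgather]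
      noncomm_ring
    rw [hf]
    exact hprod.congr_deriv hval
  have hdiff : Differentiable ℂ f := fun t => (hderiv t).differentiableAt
  have hconst : f p = f 0 :=
    is_const_of_deriv_eq_zero hdiff (fun t => (hderiv t).deriv) p 0
  have hf0 : f 0 = X := by
    simp [hf, hG, exp_zero]
  have : exp (p • (-Z)) * G p * exp (p • Z) = X := hconst.trans hf0
  simpa [smul_neg, neg_smul, hG] using this

lemma exp_smul_mul_exp_neg_smul {n : ℕ} (Z : Matrix (Fin n) (Fin n) ℂ) (p : ℂ) :
    exp (p • Z) * exp (-(p • Z)) = 1 := by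
  rw [← Matrix.exp_add_of_commute _ _ ((Commute.refl (p • Z)).neg_right), add_neg_cancel, exp_zero]

lemma exp_neg_smul_mul_exp_smul {n : ℕ} (Z : Matrix (Fin n) (Fin n) ℂ) (p : ℂ) :
    exp (-(p • Z)) * exp (p • Z) = 1 := by
  rw [← Matrix.exp_add_of_commute _ _ ((Commute.refl (p • Z)).neg_left), neg_add_cancel, exp_zero]

end Aux

theorem stmt4 {n : ℕ} (X Y Z : Matrix (Fin n) (Fin n) ℂ) (κ : ℂ)
    (hXY : X * Y - Y * X = κ • Z) (hYZ : Y * Z - Z * Y = κ • X)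
    (hZX : Z * X - X * Z = κ • Y) (a b p q : ℂ)
    (ha : a = q * Complex.cos (κ * p)) (hb : b = q * Complex.sin (κ * p)) :
    exp (a • X + b • Y) = exp (p • Z) * exp (q • X) * exp (-p • Z) := by
  have hone : exp (p • Z) * exp (-(p • Z)) = 1 := exp_smul_mul_exp_neg_smul Z p
  have hone' : exp (-(p • Z)) * exp (p • Z) = 1 := exp_neg_smul_mul_exp_smul Z p
  have hunit : IsUnit (exp (p • Z)) := ⟨⟨_, _, hone, hone'⟩, rfl⟩
  have hinv : exp (-(p • Z)) = (exp (p • Z))⁻¹ := Matrix.exp_neg (p • Z)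
  have hkey : exp (-(p • Z)) * (Complex.cos (κ * p) • X + Complex.sin (κ * p) • Y)
      * exp (p • Z) = X := conj_key X Y Z κ hYZ hZX p
  have hconj : exp (p • Z) * X * (exp (p • Z))⁻¹
      = Complex.cos (κ * p) • X + Complex.sin (κ * p) • Y := by
    rw [← hinv]
    conv_lhs => rw [← hkey]
    exact sandwich_aux _ _ _ hone hone'
  have harg : a • X + b • Y = exp (p • Z) * (q • X) * (exp (p • Z))⁻¹ := by
    have h5 : exp (p • Z) * (q • X) * (exp (p • Z))⁻¹
        = q • (exp (p • Z) * X * (exp (p • Z))⁻¹) := by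
      rw [Matrix.mul_smul, Matrix.smul_mul]
    rw [h5, hconj, ha, hb, smul_add, smul_smul, smul_smul]
  rw [harg, Matrix.exp_conj (exp (p • Z)) (q • X) hunit, ← hinv, neg_smul]
end

section
/- Let X, Y, Z be n×n complex matrices with [X,Y] = κZ, [Y,Z] = κX, [Z,X] = κY for a scalar κ, and let a, b, p', q be complex scalars satisfying b = q * cos(κp') and a = -q * sin(κp'). Then exp(a•X + b•Y) = exp(p'•Z) * exp(q•Y) * exp(-p'•Z). -/
open NormedSpace

section aux

attribute [local instance] Matrix.linftyOpNormedRing Matrix.linftyOpNormedAlgebra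

lemma conj_rot {n : ℕ} (X Y Z : Matrix (Fin n) (Fin n) ℂ) (κ : ℂ)
    (hYZ : Y * Z - Z * Y = κ • X)
    (hZX : Z * X - X * Z = κ • Y) (q : ℂ) (p' : ℂ) :
    exp (-p' • Z) * ((-q * Complex.sin (κ * p')) • X + (q * Complex.cos (κ * p')) • Y) *
      exp (p' • Z) = q • Y := by
  set g : ℂ → Matrix (Fin n) (Fin n) ℂ := fun t =>
    exp (t • (-Z)) * ((-q * Complex.sin (κ * t)) • X + (q * Complex.cos (κ * t)) • Y) *
      exp (t • Z) with hg
  have hZY : Z * Y = Y * Z - κ • X := by rw [← hYZ]; abel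
  have hZX' : Z * X = X * Z + κ • Y := by rw [← hZX]; abel
  have hderiv : ∀ t : ℂ, HasDerivAt g 0 t := by
    intro t
    have h1 : HasDerivAt (fun u : ℂ => exp (u • (-Z))) (exp (t • (-Z)) * (-Z)) t :=
      hasDerivAt_exp_smul_const (-Z) t
    have h3 : HasDerivAt (fun u : ℂ => exp (u • Z)) (Z * exp (t • Z)) t :=
      hasDerivAt_exp_smul_const' Z t
    have hc : HasDerivAt (fun u : ℂ => -q * Complex.sin (κ * u))
        (-q * (Complex.cos (κ * t) * κ)) t := by
      have := ((Complex.hasDerivAt_sin (κ * t)).comp t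
        ((hasDerivAt_id t).const_mul κ)).const_mul (-q)
      simpa [mul_comm] using this
    have hd : HasDerivAt (fun u : ℂ => q * Complex.cos (κ * u))
        (q * (-Complex.sin (κ * t) * κ)) t := by
      have := ((Complex.hasDerivAt_cos (κ * t)).comp t
        ((hasDerivAt_id t).const_mul κ)).const_mul q
      simpa [mul_comm] using this
    have h2 : HasDerivAt (fun u : ℂ =>
          (-q * Complex.sin (κ * u)) • X + (q * Complex.cos (κ * u)) • Y)
        ((-q * (Complex.cos (κ * t) * κ)) • X + (q * (-Complex.sin (κ * t) * κ)) • Y) t :=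
      (hc.smul_const X).add (hd.smul_const Y)
    have hD := (h1.mul h2).mul h3
    set c := -q * Complex.sin (κ * t) with hcdef
    set d := q * Complex.cos (κ * t) with hddef
    have key2 : ((-q * (Complex.cos (κ * t) * κ)) • X + (q * (-Complex.sin (κ * t) * κ)) • Y)
        = Z * (c • X + d • Y) - (c • X + d • Y) * Z := by
      simp only [mul_add, add_mul, Matrix.mul_smul, Matrix.smul_mul, hZY, hZX', hcdef, hddef]
      module
    rw [key2] at hD
    convert hD using 1
    case e'_4 => rfl
    case e'_5 => rfl
    case e'_6 => rfl
    case e'_8 => rfl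
    simp only [Pi.mul_apply, ← hcdef, ← hddef]
    set Em := exp (t • (-Z))
    set Ep := exp (t • Z)
    set G : Matrix (Fin n) (Fin n) ℂ := c • X + d • Y
    noncomm_ring
  have hconst : g p' = g 0 := by
    refine is_const_of_deriv_eq_zero (fun t => (hderiv t).differentiableAt) (fun t => ?_) p' 0
    exact (hderiv t).deriv
  have h0 : g 0 = q • Y := by simp [hg]
  have hexp : (-p' : ℂ) • Z = p' • (-Z) := by rw [neg_smul, smul_neg]
  rw [hexp]
  exact hconst.trans h0

end aux

theorem stmt5 {n : ℕ} (X Y Z : Matrix (Fin n) (Fin n) ℂ) (κ : ℂ)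
    (hXY : X * Y - Y * X = κ • Z) (hYZ : Y * Z - Z * Y = κ • X)
    (hZX : Z * X - X * Z = κ • Y) (a b p' q : ℂ)
    (hb : b = q * Complex.cos (κ * p')) (ha : a = -q * Complex.sin (κ * p')) :
    NormedSpace.exp (a • X + b • Y) = NormedSpace.exp (p' • Z) * NormedSpace.exp (q • Y) * NormedSpace.exp (-p' • Z) := by
  have key := conj_rot X Y Z κ hYZ hZX q p'
  rw [← ha, ← hb] at key
  have hU : IsUnit (exp (p' • Z)) := Matrix.isUnit_exp _
  have hneg : exp (-p' • Z) = (exp (p' • Z))⁻¹ := by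
    rw [neg_smul, Matrix.exp_neg]
  have hM : a • X + b • Y = exp (p' • Z) * (q • Y) * exp (-p' • Z) := by
    rw [← key, hneg]
    obtain ⟨u, hu⟩ := hU
    rw [← hu, ← Matrix.coe_units_inv]
    rw [mul_assoc, mul_assoc, Units.mul_inv, mul_one, Units.mul_inv_cancel_left]
  rw [hM, hneg, Matrix.exp_conj _ _ hU, ← hneg]
end

section
/- Let X, Y, Z be n×n complex matrices satisfying [X,Y] = κZ, [Y,Z] = κX, [Z,X] = κY for a scalar κ. Then for any complex scalar p, exp(-p•X) * Y * exp(p•X) = cos(κp) • Y - sin(κp) • Z and exp(-p•X) * Z * exp(p•X) = cos(κp) • Z + sin(κp) • Y. -/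
open NormedSpace

theorem exp_semiconj_aux {𝔸 : Type*} [NormedRing 𝔸] [NormedAlgebra ℂ 𝔸] [CompleteSpace 𝔸]
    (A B : 𝔸) (μ : ℂ) (h : A * B = B * A + μ • B) :
    exp A * B = Complex.exp μ • (B * exp A) := by
  have hs : SemiconjBy B (A + μ • 1) A := by
    unfold SemiconjBy
    rw [mul_add, mul_smul_comm, mul_one, h]
  have hn : ∀ k : ℕ, A ^ k * B = B * (A + μ • 1) ^ k := fun k => (hs.pow_right k).symm
  have h1 : exp A * B = B * exp (A + μ • 1) := by
    rw [exp_eq_tsum ℂ]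
    beta_reduce
    rw [← (expSeries_summable' (𝕂 := ℂ) A).tsum_mul_right B,
      ← (expSeries_summable' (𝕂 := ℂ) (A + μ • 1)).tsum_mul_left B]
    congr 1
    ext k
    rw [smul_mul_assoc, mul_smul_comm, hn k]
  have hcomm : Commute (μ • (1 : 𝔸)) A := (Commute.one_left A).smul_left μ
  have h2 : exp (A + μ • 1) = Complex.exp μ • exp A := by
    rw [add_comm, exp_add_of_commute_of_mem_ball (𝕂 := ℂ) hcomm
      ((expSeries_radius_eq_top ℂ 𝔸).symm ▸ edist_lt_top _ _)
      ((expSeries_radius_eq_top ℂ 𝔸).symm ▸ edist_lt_top _ _)]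
    have h3 : (μ • (1 : 𝔸)) = algebraMap ℂ 𝔸 μ := (Algebra.algebraMap_eq_smul_one μ).symm
    rw [h3, ← algebraMap_exp_comm, Complex.exp_eq_exp_ℂ, Algebra.algebraMap_eq_smul_one,
      smul_mul_assoc, one_mul]
  rw [h1, h2, mul_smul_comm]

theorem matrix_exp_semiconj {n : ℕ} (A B : Matrix (Fin n) (Fin n) ℂ) (μ : ℂ)
    (h : A * B = B * A + μ • B) :
    exp A * B = Complex.exp μ • (B * exp A) := by
  letI : SeminormedRing (Matrix (Fin n) (Fin n) ℂ) := Matrix.linftyOpSemiNormedRing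
  letI : NormedRing (Matrix (Fin n) (Fin n) ℂ) := Matrix.linftyOpNormedRing
  letI : NormedAlgebra ℂ (Matrix (Fin n) (Fin n) ℂ) := Matrix.linftyOpNormedAlgebra
  exact exp_semiconj_aux A B μ h

theorem stmt12 {n : ℕ} (X Y Z : Matrix (Fin n) (Fin n) ℂ) (κ : ℂ)
    (hXY : X * Y - Y * X = κ • Z) (hYZ : Y * Z - Z * Y = κ • X)
    (hZX : Z * X - X * Z = κ • Y) (p : ℂ) :
    exp (-p • X) * Y * exp (p • X)
        = Complex.cos (κ * p) • Y - Complex.sin (κ * p) • Z ∧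
    exp (-p • X) * Z * exp (p • X)
        = Complex.cos (κ * p) • Z + Complex.sin (κ * p) • Y := by
  set W : Matrix (Fin n) (Fin n) ℂ := Y + Complex.I • Z with hW
  set W' : Matrix (Fin n) (Fin n) ℂ := Y - Complex.I • Z with hW'
  have hXYc : X * Y = Y * X + κ • Z := by
    rw [sub_eq_iff_eq_add] at hXY; rw [hXY]; abel
  have hXZc : X * Z = Z * X - κ • Y := by
    rw [sub_eq_iff_eq_add] at hZX; rw [hZX]; abel
  have hE : exp (-p • X) * exp (p • X) = 1 := by
    rw [← Matrix.exp_add_of_commute]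
    · rw [neg_smul, neg_add_cancel, exp_zero]
    · exact ((Commute.refl X).smul_left (-p)).smul_right p
  have key : ∀ (B : Matrix (Fin n) (Fin n) ℂ) (μ : ℂ),
      (-p • X) * B = B * (-p • X) + μ • B →
      exp (-p • X) * B * exp (p • X) = Complex.exp μ • B := by
    intro B μ hB
    rw [matrix_exp_semiconj _ _ _ hB, smul_mul_assoc, mul_assoc, hE, mul_one]
  have hcW : (-p • X) * W = W * (-p • X) + (Complex.I * κ * p) • W := by
    rw [smul_mul_assoc, mul_smul_comm, hW, mul_add, add_mul, mul_smul_comm, smul_mul_assoc,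
      hXYc, hXZc]
    match_scalars <;> (try ring_nf) <;> (try simp [Complex.I_sq]) <;> (try ring_nf)
  have hcW' : (-p • X) * W' = W' * (-p • X) + (-(Complex.I * κ * p)) • W' := by
    rw [smul_mul_assoc, mul_smul_comm, hW', mul_sub, sub_mul, mul_smul_comm, smul_mul_assoc,
      hXYc, hXZc]
    match_scalars <;> (try ring_nf) <;> (try simp [Complex.I_sq]) <;> (try ring_nf)
  have e1 := key W _ hcW
  have e2 := key W' _ hcW'
  have hYd : Y = (2 : ℂ)⁻¹ • (W + W') := by rw [hW, hW']; module
  have hZd : Z = (-((2 : ℂ)⁻¹ * Complex.I)) • (W - W') := by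
    rw [hW, hW']; match_scalars <;> (try ring_nf) <;> (try simp [Complex.I_sq]) <;> (try ring_nf)
  have hcos : Complex.cos (κ * p) =
      (2 : ℂ)⁻¹ * (Complex.exp (Complex.I * κ * p) + Complex.exp (-(Complex.I * κ * p))) := by
    rw [Complex.cos]; ring_nf
  have hsin : Complex.sin (κ * p) =
      -((2 : ℂ)⁻¹ * Complex.I) * (Complex.exp (Complex.I * κ * p)
        - Complex.exp (-(Complex.I * κ * p))) := by
    rw [Complex.sin]; ring_nf
  have g1 : exp (-p • X) * Y * exp (p • X)
      = (2 : ℂ)⁻¹ • (Complex.exp (Complex.I * κ * p) • W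
          + Complex.exp (-(Complex.I * κ * p)) • W') := by
    rw [hYd, mul_smul_comm, smul_mul_assoc, mul_add, add_mul, e1, e2]
  have g2 : exp (-p • X) * Z * exp (p • X)
      = (-((2 : ℂ)⁻¹ * Complex.I)) • (Complex.exp (Complex.I * κ * p) • W
          - Complex.exp (-(Complex.I * κ * p)) • W') := by
    rw [hZd, mul_smul_comm, smul_mul_assoc, mul_sub, sub_mul, e1, e2]
  constructor
  · rw [g1, hcos, hsin, hW, hW']
    match_scalars <;> (try ring_nf) <;> (try simp [Complex.I_sq]) <;> (try ring_nf)
  · rw [g2, hcos, hsin, hW, hW']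
    match_scalars <;> (try ring_nf) <;> (try simp [Complex.I_sq]) <;> (try ring_nf)
end

section
/- Let X, Y, Z be n×n complex matrices satisfying [X,Y] = κZ, [Y,Z] = κX, [Z,X] = κY for a scalar κ. Then for any complex scalar p, exp(-p•Y) * Z * exp(p•Y) = cos(κp) • Z - sin(κp) • X and exp(-p•Y) * X * exp(p•Y) = cos(κp) • X + sin(κp) • Z. -/
open NormedSpace

lemma semiconj_exp_s13 {n : ℕ} (Y B : Matrix (Fin n) (Fin n) ℂ) (c : ℂ)
    (h : Y * B - B * Y = c • B) (t : ℂ) :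
    exp (t • Y) * B = Complex.exp (t * c) • (B * exp (t • Y)) := by
  set W : Matrix (Fin n) (Fin n) ℂ := t • Y + (t * c) • 1 with hW
  have hstep : (t • Y) * B = B * W := by
    have h' : Y * B = c • B + B * Y := sub_eq_iff_eq_add.mp h
    rw [hW, smul_mul_assoc, h']
    simp only [mul_add, mul_smul_comm, smul_smul, smul_add, mul_one]
    module
  have hpow : ∀ k : ℕ, (t • Y) ^ k * B = B * W ^ k := by
    intro k
    induction k with
    | zero => simp
    | succ k ih =>
        rw [pow_succ', mul_assoc, ih, ← mul_assoc, hstep, mul_assoc, ← pow_succ']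
  have h1 : exp (t • Y) * B = B * exp W := by
    letI : SeminormedRing (Matrix (Fin n) (Fin n) ℂ) := Matrix.linftyOpSemiNormedRing
    letI : NormedRing (Matrix (Fin n) (Fin n) ℂ) := Matrix.linftyOpNormedRing
    letI : NormedAlgebra ℂ (Matrix (Fin n) (Fin n) ℂ) := Matrix.linftyOpNormedAlgebra
    simp only [exp_eq_tsum ℂ]
    erw [← (expSeries_summable' (𝕂 := ℂ) (t • Y)).tsum_mul_right B,
      ← (expSeries_summable' (𝕂 := ℂ) W).tsum_mul_left B]
    congr 1
    ext k
    rw [smul_mul_assoc, hpow, mul_smul_comm]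
  have hWexp : exp W = Complex.exp (t * c) • exp (t • Y) := by
    rw [hW, Matrix.exp_add_of_commute _ _ ((Commute.one_right (t • Y)).smul_right _)]
    have h2 : ((t * c) • (1 : Matrix (Fin n) (Fin n) ℂ)) = algebraMap ℂ _ (t * c) := by
      rw [Algebra.algebraMap_eq_smul_one]
    letI : SeminormedRing (Matrix (Fin n) (Fin n) ℂ) := Matrix.linftyOpSemiNormedRing
    letI : NormedRing (Matrix (Fin n) (Fin n) ℂ) := Matrix.linftyOpNormedRing
    letI : NormedAlgebra ℂ (Matrix (Fin n) (Fin n) ℂ) := Matrix.linftyOpNormedAlgebra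
    erw [h2, ← map_exp (algebraMap ℂ (Matrix (Fin n) (Fin n) ℂ)) (continuous_algebraMap _ _),
      ← Complex.exp_eq_exp_ℂ, Algebra.algebraMap_eq_smul_one, mul_comm, mul_smul_one]
  rw [h1, hWexp, mul_smul_comm]

theorem stmt13 {n : ℕ} (X Y Z : Matrix (Fin n) (Fin n) ℂ) (κ : ℂ)
    (hXY : X * Y - Y * X = κ • Z) (hYZ : Y * Z - Z * Y = κ • X)
    (hZX : Z * X - X * Z = κ • Y) (p : ℂ) :
    exp (-p • Y) * Z * exp (p • Y)
        = Complex.cos (κ * p) • Z - Complex.sin (κ * p) • X ∧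
    exp (-p • Y) * X * exp (p • Y)
        = Complex.cos (κ * p) • X + Complex.sin (κ * p) • Z := by
  have hYZ' : Y * Z = Z * Y + κ • X := by rw [← hYZ]; abel
  have hYX' : Y * X = X * Y - κ • Z := by rw [← hXY]; abel
  set B : Matrix (Fin n) (Fin n) ℂ := Z + Complex.I • X with hBdef
  set C : Matrix (Fin n) (Fin n) ℂ := Z - Complex.I • X with hCdef
  have hB : Y * B - B * Y = (-(Complex.I * κ)) • B := by
    rw [hBdef]
    simp only [mul_add, add_mul, mul_smul_comm, smul_mul_assoc, hYZ', hYX']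
    match_scalars <;> ring_nf <;> simp [Complex.I_sq] <;> ring
  have hC : Y * C - C * Y = (Complex.I * κ) • C := by
    rw [hCdef]
    simp only [mul_sub, sub_mul, mul_smul_comm, smul_mul_assoc, hYZ', hYX']
    match_scalars <;> ring_nf <;> simp [Complex.I_sq] <;> ring
  have hinv : exp (-p • Y) * exp (p • Y) = 1 := by
    rw [← Matrix.exp_add_of_commute _ _ (((Commute.refl Y).smul_left (-p)).smul_right p)]
    rw [show (-p) • Y + p • Y = 0 by module, exp_zero]
  have hBconj : exp (-p • Y) * B * exp (p • Y) = Complex.exp (κ * p * Complex.I) • B := by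
    rw [semiconj_exp_s13 Y B _ hB (-p), smul_mul_assoc, mul_assoc, hinv, mul_one,
      show (-p) * -(Complex.I * κ) = κ * p * Complex.I by ring]
  have hCconj : exp (-p • Y) * C * exp (p • Y) = Complex.exp (-(κ * p * Complex.I)) • C := by
    rw [semiconj_exp_s13 Y C _ hC (-p), smul_mul_assoc, mul_assoc, hinv, mul_one,
      show (-p) * (Complex.I * κ) = -(κ * p * Complex.I) by ring]
  have e1 : Complex.exp (κ * p * Complex.I)
      = Complex.cos (κ * p) + Complex.sin (κ * p) * Complex.I := Complex.exp_mul_I _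
  have e2 : Complex.exp (-(κ * p * Complex.I))
      = Complex.cos (κ * p) - Complex.sin (κ * p) * Complex.I := by
    rw [← neg_mul, Complex.exp_mul_I, Complex.cos_neg, Complex.sin_neg, neg_mul, ← sub_eq_add_neg]
  have hZd : Z = (2⁻¹ : ℂ) • B + (2⁻¹ : ℂ) • C := by
    rw [hBdef, hCdef]; module
  have hXd : X = (-(Complex.I) * 2⁻¹) • B + (Complex.I * 2⁻¹) • C := by
    rw [hBdef, hCdef]
    match_scalars <;> ring_nf <;> simp [Complex.I_sq] <;> ring
  constructor
  · calc exp (-p • Y) * Z * exp (p • Y)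
        = (2⁻¹ : ℂ) • (exp (-p • Y) * B * exp (p • Y))
          + (2⁻¹ : ℂ) • (exp (-p • Y) * C * exp (p • Y)) := by
          rw [hZd]; simp only [mul_add, add_mul, mul_smul_comm, smul_mul_assoc]
      _ = Complex.cos (κ * p) • Z - Complex.sin (κ * p) • X := by
          rw [hBconj, hCconj, e1, e2, hBdef, hCdef]
          match_scalars <;> ring_nf <;> simp [Complex.I_sq] <;> ring
  · calc exp (-p • Y) * X * exp (p • Y)
        = (-(Complex.I) * 2⁻¹) • (exp (-p • Y) * B * exp (p • Y))
          + (Complex.I * 2⁻¹) • (exp (-p • Y) * C * exp (p • Y)) := by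
          rw [hXd]; simp only [mul_add, add_mul, mul_smul_comm, smul_mul_assoc]
      _ = Complex.cos (κ * p) • X + Complex.sin (κ * p) • Z := by
          rw [hBconj, hCconj, e1, e2, hBdef, hCdef]
          match_scalars <;> ring_nf <;> simp [Complex.I_sq] <;> ring
end

section
/- Let X, Y, Z be n×n complex matrices with [X,Y] = κZ, [Y,Z] = κX, [Z,X] = κY for a nonzero real scalar κ, and let a, b be real numbers with a > 0. Set q = sqrt(a² + b²) and p = (1/κ)·arctan(b/a). Then exp(a•X + b•Y) = exp(p•Z) * exp(q•X) * exp(-p•Z). -/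
open NormedSpace

lemma rsm {N : ℕ} (r : ℝ) (M : Matrix (Fin N) (Fin N) ℂ) : r • M = (r : ℂ) • M := by
  ext i j
  simp [Complex.real_smul]

lemma mat_semiconj {N : ℕ} (A B C : Matrix (Fin N) (Fin N) ℂ) (h : A * B = B * C) :
    exp A * B = B * exp C := by
  letI : SeminormedRing (Matrix (Fin N) (Fin N) ℂ) := Matrix.linftyOpSemiNormedRing
  letI : NormedRing (Matrix (Fin N) (Fin N) ℂ) := Matrix.linftyOpNormedRing
  letI : NormedAlgebra ℂ (Matrix (Fin N) (Fin N) ℂ) := Matrix.linftyOpNormedAlgebra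
  have hpow : ∀ k : ℕ, A ^ k * B = B * C ^ k := by
    intro k
    induction k with
    | zero => simp
    | succ k ih => rw [pow_succ, pow_succ, mul_assoc, h, ← mul_assoc, ih, mul_assoc]
  simp only [exp_eq_tsum ℂ]
  erw [← Summable.tsum_mul_right B (expSeries_summable' (𝕂 := ℂ) A),
      ← Summable.tsum_mul_left B (expSeries_summable' (𝕂 := ℂ) C)]
  exact tsum_congr fun k => by rw [smul_mul_assoc, mul_smul_comm, hpow]

lemma exp_smul_one {N : ℕ} (μ : ℂ) :
    exp (μ • (1 : Matrix (Fin N) (Fin N) ℂ)) = Complex.exp μ • 1 := by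
  letI : SeminormedRing (Matrix (Fin N) (Fin N) ℂ) := Matrix.linftyOpSemiNormedRing
  letI : NormedRing (Matrix (Fin N) (Fin N) ℂ) := Matrix.linftyOpNormedRing
  letI : NormedAlgebra ℂ (Matrix (Fin N) (Fin N) ℂ) := Matrix.linftyOpNormedAlgebra
  have h1 : μ • (1 : Matrix (Fin N) (Fin N) ℂ) = algebraMap ℂ _ μ :=
    (Algebra.algebraMap_eq_smul_one μ).symm
  erw [h1, ← map_exp (algebraMap ℂ (Matrix (Fin N) (Fin N) ℂ)) (continuous_algebraMap _ _),
    Algebra.algebraMap_eq_smul_one, ← Complex.exp_eq_exp_ℂ]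

theorem stmt15 {n : ℕ} (X Y Z : Matrix (Fin n) (Fin n) ℂ) (κ : ℝ) (hκ : κ ≠ 0)
    (hXY : X * Y - Y * X = κ • Z) (hYZ : Y * Z - Z * Y = κ • X)
    (hZX : Z * X - X * Z = κ • Y) (a b : ℝ) (ha : 0 < a)
    (p q : ℝ) (hp : p = (1 / κ) * Real.arctan (b / a)) (hq : q = Real.sqrt (a ^ 2 + b ^ 2)) :
    exp (a • X + b • Y) = exp (p • Z) * exp (q • X) * exp (-p • Z) := by
  have hκc : (κ : ℂ) ≠ 0 := by exact_mod_cast hκ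
  set θ : ℝ := κ * p with hθdef
  have hθ : θ = Real.arctan (b / a) := by rw [hθdef, hp]; field_simp
  have hqpos : 0 < q := by rw [hq]; positivity
  have hs : Real.sqrt (1 + (b / a) ^ 2) = q / a := by
    rw [show (1 + (b / a) ^ 2) = (a ^ 2 + b ^ 2) / a ^ 2 by field_simp,
      Real.sqrt_div (by positivity), Real.sqrt_sq ha.le, hq]
  have hcos : q * Real.cos θ = a := by
    rw [hθ, Real.cos_arctan, hs]; field_simp
  have hsin : q * Real.sin θ = b := by
    rw [hθ, Real.sin_arctan, hs]
    field_simp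
  set A : Matrix (Fin n) (Fin n) ℂ := (p : ℂ) • Z with hA
  have hZXc : Z * X = X * Z + (κ : ℂ) • Y := by rw [← rsm, ← hZX]; abel
  have hZYc : Z * Y = Y * Z - (κ : ℂ) • X := by rw [← rsm, ← hYZ]; abel
  have key1 : A * (X + Complex.I • Y) =
      (X + Complex.I • Y) * (A + (-(Complex.I * ((p : ℂ) * (κ : ℂ)))) • 1) := by
    simp only [hA, mul_add, add_mul, smul_mul_assoc, mul_smul_comm, mul_one, hZXc, hZYc]
    match_scalars <;>
      first
        | ring1
        | linear_combination ((p : ℂ) * (κ : ℂ)) * Complex.I_sq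
        | linear_combination (-((p : ℂ) * (κ : ℂ))) * Complex.I_sq
  have key2 : A * (X - Complex.I • Y) =
      (X - Complex.I • Y) * (A + (Complex.I * ((p : ℂ) * (κ : ℂ))) • 1) := by
    simp only [hA, mul_sub, sub_mul, mul_add, add_mul, smul_mul_assoc, mul_smul_comm, mul_one,
      hZXc, hZYc]
    match_scalars <;>
      first
        | ring1
        | linear_combination ((p : ℂ) * (κ : ℂ)) * Complex.I_sq
        | linear_combination (-((p : ℂ) * (κ : ℂ))) * Complex.I_sq
  have hcomm : ∀ μ : ℂ, exp (A + μ • 1) = Complex.exp μ • exp A := by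
    intro μ
    rw [Matrix.exp_add_of_commute A (μ • 1) ((Commute.one_right A).smul_right μ),
      exp_smul_one, mul_smul_comm, mul_one]
  have hUV : exp A * exp (-A) = 1 := by
    rw [← Matrix.exp_add_of_commute A (-A) ((Commute.refl A).neg_right), add_neg_cancel,
      exp_zero]
  have conj1 : exp A * (X + Complex.I • Y) * exp (-A) =
      Complex.exp (-(Complex.I * ((p : ℂ) * (κ : ℂ)))) • (X + Complex.I • Y) := by
    rw [mat_semiconj _ _ _ key1, hcomm, mul_smul_comm, smul_mul_assoc, mul_assoc, hUV, mul_one]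
  have conj2 : exp A * (X - Complex.I • Y) * exp (-A) =
      Complex.exp (Complex.I * ((p : ℂ) * (κ : ℂ))) • (X - Complex.I • Y) := by
    rw [mat_semiconj _ _ _ key2, hcomm, mul_smul_comm, smul_mul_assoc, mul_assoc, hUV, mul_one]
  have e1 : Complex.exp (-(Complex.I * ((p : ℂ) * (κ : ℂ)))) =
      (Real.cos θ : ℂ) - (Real.sin θ : ℂ) * Complex.I := by
    rw [show -(Complex.I * ((p : ℂ) * (κ : ℂ))) = ((-θ : ℝ) : ℂ) * Complex.I by
        push_cast [hθdef]; ring,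
      Complex.exp_mul_I]
    push_cast
    simp [Real.cos_neg, Real.sin_neg]
    ring
  have e2 : Complex.exp (Complex.I * ((p : ℂ) * (κ : ℂ))) =
      (Real.cos θ : ℂ) + (Real.sin θ : ℂ) * Complex.I := by
    rw [show Complex.I * ((p : ℂ) * (κ : ℂ)) = ((θ : ℝ) : ℂ) * Complex.I by
        push_cast [hθdef]; ring,
      Complex.exp_mul_I]
    push_cast
    ring
  have hX : exp A * X * exp (-A) = (Real.cos θ : ℂ) • X + (Real.sin θ : ℂ) • Y := by
    have hP : exp A * X * exp (-A) = (2 : ℂ)⁻¹ •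
        (exp A * (X + Complex.I • Y) * exp (-A) +
         exp A * (X - Complex.I • Y) * exp (-A)) := by
      simp only [mul_add, add_mul, mul_sub, sub_mul, mul_smul_comm, smul_mul_assoc]
      match_scalars <;> ring
    rw [hP, conj1, conj2, e1, e2]
    match_scalars <;>
      first
        | ring1
        | linear_combination (Complex.sin (θ : ℂ)) * Complex.I_sq
        | linear_combination (-(Complex.sin (θ : ℂ))) * Complex.I_sq
  have hfin : exp A * ((q : ℂ) • X) * exp (-A) = (a : ℂ) • X + (b : ℂ) • Y := by
    rw [mul_smul_comm, smul_mul_assoc, hX, smul_add, smul_smul, smul_smul]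
    congr 1
    · congr 1; exact_mod_cast hcos
    · congr 1; exact_mod_cast hsin
  rw [rsm a, rsm b, rsm p, rsm q, rsm (-p)]
  have hnA : ((-p : ℝ) : ℂ) • Z = -A := by rw [hA, ← neg_smul]; push_cast; ring_nf
  rw [hnA, ← hA]
  calc exp ((a : ℂ) • X + (b : ℂ) • Y) = exp (exp A * ((q : ℂ) • X) * exp (-A)) := by
        rw [hfin]
    _ = exp A * exp ((q : ℂ) • X) * exp (-A) := by
        rw [Matrix.exp_neg A]
        exact Matrix.exp_conj (exp A) _ (Matrix.isUnit_exp A)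
end

section
/- Let X, Y, Z be n×n complex matrices with [X,Y] = κZ, [Y,Z] = κX, [Z,X] = κY for a nonzero real κ, and let a, b, c be real numbers with a > 0. Set p₁ = (1/κ)·arctan(b/a), q₁ = -(1/κ)·arctan(c/sqrt(a²+b²)), and r = sqrt(a²+b²+c²). Then exp(a•X + b•Y + c•Z) = exp(p₁•Z) * exp(q₁•Y) * exp(r•X) * exp(-q₁•Y) * exp(-p₁•Z). -/
open NormedSpace

attribute [local instance] Matrix.linftyOpNormedRing Matrix.linftyOpNormedAlgebra

private lemma conj_exp_aux {N : ℕ} (A B C : Matrix (Fin N) (Fin N) ℂ) (μ : ℝ)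
    (h1 : A * B - B * A = μ • C) (h2 : A * C - C * A = -μ • B) (t : ℝ) :
    exp (t • A) * B * exp (-(t • A)) = Real.cos (μ * t) • B + Real.sin (μ * t) • C := by
  set M : ℝ → Matrix (Fin N) (Fin N) ℂ :=
    fun u => Real.cos (μ * u) • B + Real.sin (μ * u) • C with hM
  set f : ℝ → Matrix (Fin N) (Fin N) ℂ :=
    fun u => exp (-(u • A)) * M u * exp (u • A) with hf
  have hE : ∀ u : ℝ, HasDerivAt (fun v : ℝ => exp (v • A)) (exp (u • A) * A) u := by
    intro u
    exact hasDerivAt_exp_smul_const A u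
  have hE' : ∀ u : ℝ, HasDerivAt (fun v : ℝ => exp (-(v • A)))
      (exp (-(u • A)) * (-A)) u := by
    intro u
    simp only [← smul_neg]
    exact hasDerivAt_exp_smul_const (-A) u
  have hMd : ∀ u : ℝ, HasDerivAt M
      ((-(μ * Real.sin (μ * u))) • B + (μ * Real.cos (μ * u)) • C) u := by
    intro u
    refine HasDerivAt.add ?_ ?_
    · simpa [mul_comm] using (((hasDerivAt_id u).const_mul μ).cos).smul_const B
    · simpa [mul_comm] using (((hasDerivAt_id u).const_mul μ).sin).smul_const C
  have hAM : ∀ u : ℝ, A * M u - M u * A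
      = Real.cos (μ * u) • (μ • C) + Real.sin (μ * u) • (-μ • B) := by
    intro u
    have : A * M u - M u * A
        = Real.cos (μ * u) • (A * B - B * A) + Real.sin (μ * u) • (A * C - C * A) := by
      simp only [hM, mul_add, add_mul, mul_smul_comm, smul_mul_assoc, smul_sub]
      abel
    rw [this, h1, h2]
  have hder0 : ∀ u : ℝ, HasDerivAt f 0 u := by
    intro u
    have hcomm : exp (u • A) * A = A * exp (u • A) :=
      (((Commute.refl A).smul_left u).exp_left).eq
    have hprod := ((hE' u).mul (hMd u)).mul (hE u)
    convert hprod using 1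
    all_goals try rfl
    rw [hcomm]
    have hkey : (-A) * M u + ((-(μ * Real.sin (μ * u))) • B + (μ * Real.cos (μ * u)) • C)
        + M u * A = 0 := by
      have h4 : (-A) * M u + ((-(μ * Real.sin (μ * u))) • B + (μ * Real.cos (μ * u)) • C)
          + M u * A
          = ((-(μ * Real.sin (μ * u))) • B + (μ * Real.cos (μ * u)) • C)
            - (A * M u - M u * A) := by noncomm_ring
      rw [h4, hAM u]
      module
    have h5 : (exp (-(u • A)) * (-A) * M u
          + exp (-(u • A)) * ((-(μ * Real.sin (μ * u))) • B + (μ * Real.cos (μ * u)) • C))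
          * exp (u • A) + exp (-(u • A)) * M u * (A * exp (u • A))
        = exp (-(u • A)) * ((-A) * M u
            + ((-(μ * Real.sin (μ * u))) • B + (μ * Real.cos (μ * u)) • C) + M u * A)
          * exp (u • A) := by noncomm_ring
    simp only [Pi.mul_apply]
    rw [h5, hkey, mul_zero, zero_mul]
  have hconst : ∀ x y : ℝ, f x = f y :=
    is_const_of_deriv_eq_zero (fun u => (hder0 u).differentiableAt)
      (fun u => (hder0 u).deriv)
  have hf0 : f 0 = B := by
    simp [hf, hM, exp_zero]
  have hft : exp (-(t • A)) * M t * exp (t • A) = B := by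
    rw [show exp (-(t • A)) * M t * exp (t • A) = f t from rfl, hconst t 0, hf0]
  have hinv1 : exp (t • A) * exp (-(t • A)) = 1 := by
    rw [← Matrix.exp_add_of_commute _ _ ((Commute.refl (t • A)).neg_right), add_neg_cancel, exp_zero]
  calc exp (t • A) * B * exp (-(t • A))
      = exp (t • A) * (exp (-(t • A)) * M t * exp (t • A)) * exp (-(t • A)) := by
        rw [hft]
    _ = (exp (t • A) * exp (-(t • A))) * M t * (exp (t • A) * exp (-(t • A))) := by
        noncomm_ring
    _ = M t := by rw [hinv1, one_mul, mul_one]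

private lemma sandwich_aux_s18 {N : ℕ} (A W : Matrix (Fin N) (Fin N) ℂ) :
    exp A * exp W * exp (-A) = exp (exp A * W * exp (-A)) := by
  have h1 : exp A * exp (-A) = 1 := by
    rw [← Matrix.exp_add_of_commute _ _ ((Commute.refl A).neg_right), add_neg_cancel, exp_zero]
  have h2 : exp (-A) * exp A = 1 := by
    rw [← Matrix.exp_add_of_commute _ _ ((Commute.refl A).neg_right).symm, neg_add_cancel, exp_zero]
  let U : (Matrix (Fin N) (Fin N) ℂ)ˣ := ⟨exp A, exp (-A), h1, h2⟩
  exact (Matrix.exp_units_conj U W).symm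

theorem stmt18 {n : ℕ} (X Y Z : Matrix (Fin n) (Fin n) ℂ) (κ : ℝ) (hκ : κ ≠ 0)
    (hXY : X * Y - Y * X = κ • Z) (hYZ : Y * Z - Z * Y = κ • X)
    (hZX : Z * X - X * Z = κ • Y) (a b c : ℝ) (ha : 0 < a)
    (p₁ q₁ r : ℝ)
    (hp₁ : p₁ = (1 / κ) * Real.arctan (b / a))
    (hq₁ : q₁ = -(1 / κ) * Real.arctan (c / Real.sqrt (a ^ 2 + b ^ 2)))
    (hr : r = Real.sqrt (a ^ 2 + b ^ 2 + c ^ 2)) :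
    exp (a • X + b • Y + c • Z)
      = exp (p₁ • Z) * exp (q₁ • Y) * exp (r • X) * exp (-q₁ • Y)
        * exp (-p₁ • Z) := by
  set s : ℝ := Real.sqrt (a ^ 2 + b ^ 2) with hsdef
  have hab : (0:ℝ) < a ^ 2 + b ^ 2 := by positivity
  have habc : (0:ℝ) < a ^ 2 + b ^ 2 + c ^ 2 := by positivity
  have hs : 0 < s := Real.sqrt_pos.2 hab
  have hr0 : 0 < r := hr ▸ Real.sqrt_pos.2 habc
  have hs2 : s ^ 2 = a ^ 2 + b ^ 2 := Real.sq_sqrt hab.le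
  have hr2 : r ^ 2 = a ^ 2 + b ^ 2 + c ^ 2 := by rw [hr]; exact Real.sq_sqrt habc.le
  have hkp : κ * p₁ = Real.arctan (b / a) := by rw [hp₁]; field_simp
  have hkq : κ * q₁ = -Real.arctan (c / s) := by rw [hq₁]; field_simp
  have h1 : 1 + (b / a) ^ 2 = (s / a) ^ 2 := by
    rw [div_pow, div_pow, hs2]; field_simp
  have h2 : 1 + (c / s) ^ 2 = (r / s) ^ 2 := by
    rw [div_pow, div_pow, hr2, hs2]; field_simp
  have hcos1 : Real.cos (κ * p₁) = a / s := by
    rw [hkp, Real.cos_arctan, h1, Real.sqrt_sq (div_nonneg hs.le ha.le)]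
    all_goals rw [one_div_div]
  have hsin1 : Real.sin (κ * p₁) = b / s := by
    rw [hkp, Real.sin_arctan, h1, Real.sqrt_sq (div_nonneg hs.le ha.le)]
    all_goals rw [div_div_div_cancel_right₀ ha.ne']
  have hcos2 : Real.cos (κ * q₁) = s / r := by
    rw [hkq, Real.cos_neg, Real.cos_arctan, h2,
      Real.sqrt_sq (div_nonneg hr0.le hs.le)]
    all_goals rw [one_div_div]
  have hsin2 : Real.sin (κ * q₁) = -(c / r) := by
    rw [hkq, Real.sin_neg, Real.sin_arctan, h2,
      Real.sqrt_sq (div_nonneg hr0.le hs.le)]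
    all_goals rw [div_div_div_cancel_right₀ hs.ne']
  -- conjugation identities
  have conjY : exp (q₁ • Y) * X * exp (-(q₁ • Y))
      = Real.cos (κ * q₁) • X + Real.sin (κ * q₁) • (-Z) :=
    conj_exp_aux Y X (-Z) κ (by rw [smul_neg, ← hXY]; noncomm_ring)
      (by rw [neg_smul, ← hYZ]; noncomm_ring) q₁
  have conjX : exp (p₁ • Z) * X * exp (-(p₁ • Z))
      = Real.cos (κ * p₁) • X + Real.sin (κ * p₁) • Y :=
    conj_exp_aux Z X Y κ hZX (by rw [neg_smul, ← hYZ]; noncomm_ring) p₁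
  have hinvZ : exp (p₁ • Z) * exp (-(p₁ • Z)) = 1 := by
    rw [← Matrix.exp_add_of_commute _ _ ((Commute.refl (p₁ • Z)).neg_right), add_neg_cancel, exp_zero]
  have conjZ : exp (p₁ • Z) * Z * exp (-(p₁ • Z)) = Z := by
    have hc : exp (p₁ • Z) * Z = Z * exp (p₁ • Z) :=
      (((Commute.refl Z).smul_left p₁).exp_left).eq
    rw [hc, mul_assoc, hinvZ, mul_one]
  -- inner step
  have step1 : exp (q₁ • Y) * exp (r • X) * exp (-(q₁ • Y))
      = exp (s • X + c • Z) := by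
    rw [sandwich_aux_s18]
    congr 1
    have hc : exp (q₁ • Y) * (r • X) * exp (-(q₁ • Y))
        = r • (exp (q₁ • Y) * X * exp (-(q₁ • Y))) := by
      rw [mul_smul_comm, smul_mul_assoc]
    rw [hc, conjY, hcos2, hsin2]
    match_scalars <;> field_simp
  have step2 : exp (p₁ • Z) * exp (s • X + c • Z) * exp (-(p₁ • Z))
      = exp (a • X + b • Y + c • Z) := by
    rw [sandwich_aux_s18]
    congr 1
    have hc : exp (p₁ • Z) * (s • X + c • Z) * exp (-(p₁ • Z))
        = s • (exp (p₁ • Z) * X * exp (-(p₁ • Z)))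
          + c • (exp (p₁ • Z) * Z * exp (-(p₁ • Z))) := by
      rw [mul_add, add_mul, mul_smul_comm, smul_mul_assoc, mul_smul_comm, smul_mul_assoc]
    rw [hc, conjX, conjZ, hcos1, hsin1]
    match_scalars <;> field_simp
  rw [neg_smul q₁, neg_smul p₁]
  calc exp (a • X + b • Y + c • Z)
      = exp (p₁ • Z) * exp (s • X + c • Z) * exp (-(p₁ • Z)) := step2.symm
    _ = exp (p₁ • Z) * (exp (q₁ • Y) * exp (r • X) * exp (-(q₁ • Y)))
        * exp (-(p₁ • Z)) := by rw [step1]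
    _ = exp (p₁ • Z) * exp (q₁ • Y) * exp (r • X) * exp (-(q₁ • Y))
        * exp (-(p₁ • Z)) := by noncomm_ring
end

section
/- Let X, Y, Z be n×n complex matrices with [X,Y] = κZ, [Y,Z] = κX, [Z,X] = κY for a nonzero real κ, and let a, b, c be real numbers with a > 0 and c > 0. Set p₁ = (1/κ)·arctan(b/a), q₁' = (1/κ)·arctan(sqrt(a²+b²)/c), and r = sqrt(a²+b²+c²). Then exp(a•X + b•Y + c•Z) = exp(p₁•Z) * exp(q₁'•Y) * exp(r•Z) * exp(-q₁'•Y) * exp(-p₁•Z). -/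
open NormedSpace

attribute [local instance] Matrix.linftyOpNormedRing Matrix.linftyOpNormedAlgebra

section Aux
variable {n : ℕ}

private lemma expRC (A : Matrix (Fin n) (Fin n) ℂ) : exp A = exp A :=
  rfl

private lemma my_exp_mul_exp_neg (g : Matrix (Fin n) (Fin n) ℂ) :
    exp g * exp (-g) = 1 := by
  rw [← Matrix.exp_add_of_commute _ _ ((Commute.refl g).neg_right)]
  simp

private lemma my_exp_neg_mul_exp (g : Matrix (Fin n) (Fin n) ℂ) :
    exp (-g) * exp g = 1 := by
  rw [← Matrix.exp_add_of_commute _ _ ((Commute.refl g).neg_left)]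
  simp

private lemma conj_exp (g A : Matrix (Fin n) (Fin n) ℂ) :
    exp g * exp A * exp (-g) = exp (exp g * A * exp (-g)) := by
  let U : (Matrix (Fin n) (Fin n) ℂ)ˣ :=
    ⟨exp g, exp (-g), my_exp_mul_exp_neg g, my_exp_neg_mul_exp g⟩
  exact (exp_units_conj U A).symm

private lemma conj_of_commute (g A : Matrix (Fin n) (Fin n) ℂ) (h : Commute g A) :
    exp g * A * exp (-g) = A := by
  have h2 : exp g * A = A * exp g := (h.symm.exp_right).symm
  rw [h2, mul_assoc, my_exp_mul_exp_neg, mul_one]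

end Aux

section Rot
variable {n : ℕ}

private lemma rot (A B C : Matrix (Fin n) (Fin n) ℂ) (κ : ℝ)
    (h1 : A * B - B * A = κ • C) (h2 : A * C - C * A = -(κ • B)) (t : ℝ) :
    exp (t • A) * B * exp (-(t • A))
      = Real.cos (κ * t) • B + Real.sin (κ * t) • C := by
  have hneg : ∀ s : ℝ, -(s • A) = s • (-A) := fun s => (smul_neg s A).symm
  set Mt : ℝ → Matrix (Fin n) (Fin n) ℂ :=
    fun s => Real.cos (κ * s) • B + Real.sin (κ * s) • C with hMt
  have hMd : ∀ s : ℝ, HasDerivAt Mt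
      ((-Real.sin (κ * s) * κ) • B + (Real.cos (κ * s) * κ) • C) s := by
    intro s
    have hlin : HasDerivAt (fun y : ℝ => κ * y) κ s := by
      simpa using (hasDerivAt_id s).const_mul κ
    have hcos : HasDerivAt (fun y : ℝ => Real.cos (κ * y)) (-Real.sin (κ * s) * κ) s :=
      (Real.hasDerivAt_cos (κ * s)).comp s hlin
    have hsin : HasDerivAt (fun y : ℝ => Real.sin (κ * y)) (Real.cos (κ * s) * κ) s :=
      (Real.hasDerivAt_sin (κ * s)).comp s hlin
    exact (hcos.smul_const B).add (hsin.smul_const C)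
  set F : ℝ → Matrix (Fin n) (Fin n) ℂ :=
    fun s => exp (s • (-A)) * Mt s * exp (s • A) with hF
  have hFd : ∀ s : ℝ, HasDerivAt F 0 s := by
    intro s
    have hem : HasDerivAt (fun u : ℝ => exp (u • (-A))) (exp (s • (-A)) * (-A)) s :=
      hasDerivAt_exp_smul_const (-A) s
    have hep : HasDerivAt (fun u : ℝ => exp (u • A)) (A * exp (s • A)) s :=
      hasDerivAt_exp_smul_const' A s
    have hprod := ((hem.mul (hMd s)).mul hep)
    convert hprod using 1
    · rfl
    · rfl
    · rfl
    · rfl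
    have key : (-A) * Mt s + ((-Real.sin (κ * s) * κ) • B + (Real.cos (κ * s) * κ) • C)
        + Mt s * A = 0 := by
      have e1 : A * B = B * A + κ • C := by
        rw [sub_eq_iff_eq_add] at h1; rw [h1]; abel
      have e2 : A * C = C * A - κ • B := by
        rw [sub_eq_iff_eq_add] at h2; rw [h2]; abel
      simp only [hMt, mul_add, add_mul, mul_smul_comm, smul_mul_assoc, neg_mul, e1, e2]
      module
    calc (0 : Matrix (Fin n) (Fin n) ℂ)
        = exp (s • (-A)) * (((-A) * Mt s
            + ((-Real.sin (κ * s) * κ) • B + (Real.cos (κ * s) * κ) • C)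
            + Mt s * A) * exp (s • A)) := by rw [key]; simp
      _ = (exp (s • (-A)) * (-A) * Mt s
            + exp (s • (-A)) * ((-Real.sin (κ * s) * κ) • B + (Real.cos (κ * s) * κ) • C))
            * exp (s • A)
            + exp (s • (-A)) * Mt s * (A * exp (s • A)) := by noncomm_ring
  have hconst : ∀ s : ℝ, F s = F 0 := by
    intro s
    exact is_const_of_deriv_eq_zero
      (fun u => (hFd u).differentiableAt) (fun u => (hFd u).deriv) s 0
  have hF0 : F 0 = B := by simp [hF, hMt]
  have hBt : exp (t • (-A)) * Mt t * exp (t • A) = B := by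
    rw [← hF0]; exact hconst t
  have hone : exp (t • A) * exp (t • (-A)) = 1 := by
    rw [← expRC, ← expRC, smul_neg, my_exp_mul_exp_neg]
  rw [expRC, expRC, hneg]
  show exp (t • A) * B * exp (t • (-A)) = Mt t
  rw [← hBt]
  calc exp (t • A) * (exp (t • (-A)) * Mt t * exp (t • A)) * exp (t • (-A))
      = (exp (t • A) * exp (t • (-A))) * Mt t * (exp (t • A) * exp (t • (-A))) := by
        noncomm_ring
    _ = Mt t := by rw [hone]; simp

end Rot

theorem stmt19 {n : ℕ} (X Y Z : Matrix (Fin n) (Fin n) ℂ) (κ : ℝ) (hκ : κ ≠ 0)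
    (hXY : X * Y - Y * X = κ • Z) (hYZ : Y * Z - Z * Y = κ • X)
    (hZX : Z * X - X * Z = κ • Y) (a b c : ℝ) (ha : 0 < a) (hc : 0 < c)
    (p₁ q₁' r : ℝ)
    (hp₁ : p₁ = (1 / κ) * Real.arctan (b / a))
    (hq₁' : q₁' = (1 / κ) * Real.arctan (Real.sqrt (a ^ 2 + b ^ 2) / c))
    (hr : r = Real.sqrt (a ^ 2 + b ^ 2 + c ^ 2)) :
    exp (a • X + b • Y + c • Z)
      = exp (p₁ • Z) * exp (q₁' • Y) * exp (r • Z) * exp (-q₁' • Y)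
        * exp (-p₁ • Z) := by
  set s : ℝ := Real.sqrt (a ^ 2 + b ^ 2) with hs
  have hs0 : 0 < s := Real.sqrt_pos.2 (by positivity)
  have hs2 : s ^ 2 = a ^ 2 + b ^ 2 := Real.sq_sqrt (by positivity)
  have hr0 : 0 < r := hr ▸ Real.sqrt_pos.2 (by positivity)
  have hr2 : r ^ 2 = a ^ 2 + b ^ 2 + c ^ 2 := hr ▸ Real.sq_sqrt (by positivity)
  have hκp : κ * p₁ = Real.arctan (b / a) := by rw [hp₁]; field_simp
  have hκq : κ * q₁' = Real.arctan (s / c) := by rw [hq₁']; field_simp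
  -- trig values
  have hsqp : Real.sqrt (1 + (b / a) ^ 2) = s / a := by
    rw [show 1 + (b / a) ^ 2 = (a ^ 2 + b ^ 2) / a ^ 2 by field_simp,
      Real.sqrt_div' _ (by positivity), Real.sqrt_sq ha.le]
  have hsqq : Real.sqrt (1 + (s / c) ^ 2) = r / c := by
    rw [show 1 + (s / c) ^ 2 = (a ^ 2 + b ^ 2 + c ^ 2) / c ^ 2 by field_simp; linarith [hs2]]
    rw [← hr2, Real.sqrt_div (by positivity), Real.sqrt_sq hc.le, Real.sqrt_sq hr0.le]
  have cosp : Real.cos (κ * p₁) = a / s := by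
    rw [hκp, Real.cos_arctan, hsqp]; field_simp
  have sinp : Real.sin (κ * p₁) = b / s := by
    rw [hκp, Real.sin_arctan, hsqp]; field_simp
  have cosq : Real.cos (κ * q₁') = c / r := by
    rw [hκq, Real.cos_arctan, hsqq]; field_simp
  have sinq : Real.sin (κ * q₁') = s / r := by
    rw [hκq, Real.sin_arctan, hsqq]; field_simp
  -- rotations
  have hrotY : exp (q₁' • Y) * Z * exp (-(q₁' • Y))
      = Real.cos (κ * q₁') • Z + Real.sin (κ * q₁') • X :=
    rot Y Z X κ hYZ (by rw [← hXY, neg_sub]) q₁'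
  have hrotZ : exp (p₁ • Z) * X * exp (-(p₁ • Z))
      = Real.cos (κ * p₁) • X + Real.sin (κ * p₁) • Y :=
    rot Z X Y κ hZX (by rw [← hYZ, neg_sub]) p₁
  -- step 1 : inner conjugation
  have step1 : exp (q₁' • Y) * exp (r • Z) * exp (-(q₁' • Y))
      = exp ((r * Real.cos (κ * q₁')) • Z + (r * Real.sin (κ * q₁')) • X) := by
    rw [conj_exp]
    congr 1
    rw [show exp (q₁' • Y) * (r • Z) * exp (-(q₁' • Y))
        = r • (exp (q₁' • Y) * Z * exp (-(q₁' • Y))) by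
      rw [mul_smul_comm, smul_mul_assoc]]
    rw [hrotY, smul_add, smul_smul, smul_smul]
  -- step 2 : outer conjugation
  have hZfix : exp (p₁ • Z) * Z * exp (-(p₁ • Z)) = Z :=
    conj_of_commute _ _ ((Commute.refl Z).smul_left p₁)
  have step2 : exp (p₁ • Z)
        * exp ((r * Real.cos (κ * q₁')) • Z + (r * Real.sin (κ * q₁')) • X)
        * exp (-(p₁ • Z))
      = exp (a • X + b • Y + c • Z) := by
    rw [conj_exp]
    congr 1
    rw [show exp (p₁ • Z) * ((r * Real.cos (κ * q₁')) • Z + (r * Real.sin (κ * q₁')) • X)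
          * exp (-(p₁ • Z))
        = (r * Real.cos (κ * q₁')) • (exp (p₁ • Z) * Z * exp (-(p₁ • Z)))
          + (r * Real.sin (κ * q₁')) • (exp (p₁ • Z) * X * exp (-(p₁ • Z))) by
      simp only [mul_add, add_mul, mul_smul_comm, smul_mul_assoc]]
    rw [hZfix, hrotZ, cosp, sinp, cosq, sinq]
    have e1 : r * (c / r) = c := by field_simp
    have e2 : r * (s / r) * (a / s) = a := by field_simp
    have e3 : r * (s / r) * (b / s) = b := by field_simp
    rw [smul_add, smul_smul, smul_smul, e1, e2, e3]
    abel
  rw [neg_smul, neg_smul, ← step2, ← step1]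
  noncomm_ring
end
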